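/- Let k, ℓ ≥ 0, let π1 ∈ T_k and π2 ∈ T_ℓ (with the convention T_0 = {ε}). Then C1(π1, π2) = π1·(k+ℓ+1)·π2^{+k} is a two-stack sortable permutation of length k+ℓ+1. -/

import Mathlib

namespace TSP

theorem foldr_max_mem {α : Type} [LinearOrder α] (x : α) (l : List α) :
    l.foldr max x ∈ x :: l := by
  induction l with
  | nil => simp
  | cons a t ih =>
    simp only [List.foldr_cons]
    rcases max_choice a (t.foldr max x) with h | h <;> rw [h]
    · simp
    · rcases List.mem_cons.mp ih with h' | h'
      · rw [h']; simp
      · exact List.mem_cons.mpr (Or.inr (List.mem_cons.mpr (Or.inr h')))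

theorem length_takeWhile_lt {α : Type} [DecidableEq α] {m : α} {l : List α}
    (h : m ∈ l) : (l.takeWhile (· ≠ m)).length < l.length := by
  have hd : l.dropWhile (· ≠ m) ≠ [] := by
    intro hnil
    have := List.dropWhile_eq_nil_iff.mp hnil m h
    simp at this
  have hsum : (l.takeWhile (· ≠ m)).length + (l.dropWhile (· ≠ m)).length = l.length := by
    rw [← List.length_append, List.takeWhile_append_dropWhile]
  have : 0 < (l.dropWhile (· ≠ m)).length := List.length_pos_iff.mpr hd
  omega

theorem length_tail_dropWhile_lt {α : Type} [DecidableEq α] {m : α} {l : List α}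
    (h : l ≠ []) : ((l.dropWhile (· ≠ m)).tail).length < l.length := by
  have hsum : (l.takeWhile (· ≠ m)).length + (l.dropWhile (· ≠ m)).length = l.length := by
    rw [← List.length_append, List.takeWhile_append_dropWhile]
  have h2 : ((l.dropWhile (· ≠ m)).tail).length = (l.dropWhile (· ≠ m)).length - 1 :=
    List.length_tail
  have : 0 < l.length := List.length_pos_iff.mpr h
  omega

/-- The stack-sorting operator `S`: `S(ε) = ε`, and if `A` is nonempty with
largest element `m` and `A = A_L · (m) · A_R`, then `S(A) = S(A_L) · S(A_R) · (m)`. -/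
def S {α : Type} [LinearOrder α] : List α → List α
  | [] => []
  | x :: l =>
    let m := l.foldr max x
    S ((x :: l).takeWhile (· ≠ m)) ++ S (((x :: l).dropWhile (· ≠ m)).tail) ++ [m]
termination_by l => l.length
decreasing_by
  · have hm := foldr_max_mem x l
    rw [← List.foldr_attach] at hm
    exact length_takeWhile_lt hm
  · exact length_tail_dropWhile_lt (by simp)

/-- The identity permutation `id_n = (1, 2, …, n)` as a list. -/
def idPerm (n : ℕ) : List ℕ := List.range' 1 n

/-- `l` is a permutation of `{1, …, n}` (viewed as a sequence). -/
def IsPermOf (n : ℕ) (l : List ℕ) : Prop := l.Perm (idPerm n)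

/-- `l` is a two-stack sortable permutation (of `{1, …, len l}`). -/
def Is2SS (l : List ℕ) : Prop := IsPermOf l.length l ∧ S (S l) = idPerm l.length

/-- `σ^{+k}`: add `k` to every entry. -/
def shift (k : ℕ) (l : List ℕ) : List ℕ := l.map (· + k)

/-- `σ^{+(k1,m,k2)}`: add `k1` to every entry strictly smaller than `m`, `k2` to the others. -/
def shift3 (k1 m k2 : ℕ) (l : List ℕ) : List ℕ :=
  l.map (fun a => if a < m then a + k1 else a + k2)

/-- Standardization `P(A)`: the permutation of `{1,…,len A}` in the same relative order. -/
def stand (l : List ℕ) : List ℕ := l.map (fun a => (l.filter (fun b => b ≤ a)).length)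

/-- Avoidance of the pattern 231: no positions `i < j < k` with `l(k) < l(i) < l(j)`. -/
def Avoids231 (l : List ℕ) : Prop :=
  ¬ ∃ i j k, i < j ∧ j < k ∧ k < l.length ∧
      l.getD k 0 < l.getD i 0 ∧ l.getD i 0 < l.getD j 0

/-- The list of values of the left-to-right maxima of `l`, in order. -/
def lrMaxima (l : List ℕ) : List ℕ :=
  ((List.range l.length).filter
    (fun i => (l.take i).all (fun b => b < l.getD i 0))).map (fun i => l.getD i 0)

/-- `lmax`: the number of left-to-right maxima. -/
def lmax (l : List ℕ) : ℕ :=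
  (List.range l.length).countP (fun i => (l.take i).all (fun b => b < l.getD i 0))

/-- `rmax`: the number of right-to-left maxima. -/
def rmax (l : List ℕ) : ℕ :=
  (List.range l.length).countP (fun i => (l.drop (i+1)).all (fun b => b < l.getD i 0))

/-- `asc`: the number of ascents. -/
def asc (l : List ℕ) : ℕ :=
  (List.range (l.length - 1)).countP (fun i => l.getD i 0 < l.getD (i+1) 0)

/-- `des`: the number of descents. -/
def des (l : List ℕ) : ℕ :=
  (List.range (l.length - 1)).countP (fun i => l.getD (i+1) 0 < l.getD i 0)

/-- `slmax(π)`: the number of left-to-right maxima of `S(π)`. -/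
def slmax (l : List ℕ) : ℕ := lmax (S l)

/-- `sldes(π)`: the number of entries `a` that precede `a - 1` in `S(π)`. -/
def sldes (l : List ℕ) : ℕ :=
  (List.range (S l).length).countP
    (fun i => ((S l).drop (i+1)).any (fun b => b + 1 = (S l).getD i 0))

/-- The construction `C1(π1, π2) = π1 · (k+ℓ+1) · π2^{+k}`. -/
def C1 (p1 p2 : List ℕ) : List ℕ :=
  p1 ++ (p1.length + p2.length + 1) :: shift p1.length p2

/-- The `i`-th left-to-right maximum `a_i` of `S(π2)` (1-indexed). -/
def lrm (p2 : List ℕ) (i : ℕ) : ℕ := (lrMaxima (S p2)).getD (i - 1) 0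

/-- The construction `C2(π1, π2, i) = π1^{+(0,k,a_i)} · (k+ℓ+1) · π2^{+(k-1,a_i+1,k)}`. -/
def C2 (p1 p2 : List ℕ) (i : ℕ) : List ℕ :=
  shift3 0 p1.length (lrm p2 i) p1 ++
    (p1.length + p2.length + 1) :: shift3 (p1.length - 1) (lrm p2 i + 1) p1.length p2

/-- The decomposition `D(π) = (P(π_ℓ), P(π_r))`, where `π = π_ℓ · (n) · π_r`
with `n` the largest entry of `π`. -/
def D (l : List ℕ) : List ℕ × List ℕ :=
  match l with
  | [] => ([], [])
  | x :: t =>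
    let m := t.foldr max x
    (stand ((x :: t).takeWhile (· ≠ m)), stand (((x :: t).dropWhile (· ≠ m)).tail))

theorem S_nil : S ([] : List ℕ) = [] := by rw [S]

theorem S_cons (x : ℕ) (l : List ℕ) :
    S (x :: l) = S ((x :: l).takeWhile (· ≠ l.foldr max x)) ++
      S (((x :: l).dropWhile (· ≠ l.foldr max x)).tail) ++ [l.foldr max x] := by
  rw [S]

theorem le_foldr_max (x : ℕ) (l : List ℕ) : ∀ a ∈ x :: l, a ≤ l.foldr max x := by
  induction l generalizing x with
  | nil => intro a ha; simp at ha; simp [ha]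
  | cons b t ih =>
    intro a ha
    simp only [List.foldr_cons]
    rcases List.mem_cons.mp ha with h | h
    · exact le_trans (ih x a (by simp [h])) (le_max_right _ _)
    · rcases List.mem_cons.mp h with h' | h'
      · subst h'; exact le_max_left _ _
      · exact le_trans (ih x a (by simp [h'])) (le_max_right _ _)

theorem foldr_max_eq {x m : ℕ} {l : List ℕ} (hm : m ∈ x :: l)
    (hle : ∀ a ∈ x :: l, a ≤ m) : l.foldr max x = m :=
  le_antisymm (hle _ (foldr_max_mem x l)) (le_foldr_max x l m hm)

theorem takeWhile_split {p : ℕ → Bool} {m : ℕ} {A B : List ℕ}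
    (hA : ∀ a ∈ A, p a = true) (hm : p m = false) :
    (A ++ m :: B).takeWhile p = A ∧ (A ++ m :: B).dropWhile p = m :: B := by
  induction A with
  | nil => simp [List.takeWhile_cons, List.dropWhile_cons, hm]
  | cons a A ih =>
    have ha : p a = true := hA a (by simp)
    have ih' := ih (fun b hb => hA b (by simp [hb]))
    simp only [List.cons_append, List.takeWhile_cons, List.dropWhile_cons, ha]
    simp [ih'.1, ih'.2]

theorem takeWhile_append_all {p : ℕ → Bool} {A B : List ℕ} (hA : ∀ a ∈ A, p a = true) :
    (A ++ B).takeWhile p = A ++ B.takeWhile p ∧ (A ++ B).dropWhile p = B.dropWhile p := by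
  induction A with
  | nil => simp
  | cons a A ih =>
    have ha : p a = true := hA a (by simp)
    have ih' := ih (fun b hb => hA b (by simp [hb]))
    simp only [List.cons_append, List.takeWhile_cons, List.dropWhile_cons]
    simp [ha, ih'.1, ih'.2]

theorem dropWhile_ne_mem {m : ℕ} {l : List ℕ} (h : m ∈ l) :
    l.dropWhile (· ≠ m) = m :: (l.dropWhile (· ≠ m)).tail := by
  induction l with
  | nil => simp at h
  | cons a t ih =>
    by_cases ha : a = m
    · subst ha; simp [List.dropWhile_cons]
    · have hm : m ∈ t := by
        rcases List.mem_cons.mp h with h' | h'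
        · exact absurd h'.symm ha
        · exact h'
      rw [List.dropWhile_cons, if_pos (by simpa using ha)]
      exact ih hm

theorem S_split (A B : List ℕ) (m : ℕ) (hA : ∀ a ∈ A, a < m) (hB : ∀ b ∈ B, b < m) :
    S (A ++ m :: B) = S A ++ S B ++ [m] := by
  cases hl : A ++ m :: B with
  | nil => simp at hl
  | cons x t =>
    have hmem : m ∈ x :: t := by rw [← hl]; simp
    have hle : ∀ a ∈ x :: t, a ≤ m := by
      rw [← hl]
      intro a ha
      rcases List.mem_append.mp ha with h | h
      · exact le_of_lt (hA a h)
      · rcases List.mem_cons.mp h with h | h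
        · exact le_of_eq h
        · exact le_of_lt (hB a h)
    have hmax : t.foldr max x = m := foldr_max_eq hmem hle
    have hsp := takeWhile_split (p := (· ≠ m)) (m := m) (B := B)
      (fun a ha => by simpa using ne_of_lt (hA a ha)) (by simp)
    rw [S_cons, hmax, ← hl, hsp.1, hsp.2, List.tail_cons]

theorem S_perm : ∀ l : List ℕ, (S l).Perm l
  | [] => by rw [S_nil]
  | x :: t => by
    have hdrop : (x :: t).dropWhile (· ≠ t.foldr max x) =
        t.foldr max x :: ((x :: t).dropWhile (· ≠ t.foldr max x)).tail :=
      dropWhile_ne_mem (foldr_max_mem x t)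
    have h1 := S_perm ((x :: t).takeWhile (· ≠ t.foldr max x))
    have h2 := S_perm (((x :: t).dropWhile (· ≠ t.foldr max x)).tail)
    have hsplit : x :: t = (x :: t).takeWhile (· ≠ t.foldr max x) ++
        (t.foldr max x :: ((x :: t).dropWhile (· ≠ t.foldr max x)).tail) := by
      rw [← hdrop, List.takeWhile_append_dropWhile]
    rw [S_cons]
    refine ((h1.append h2).append_right _).trans ?_
    rw [List.append_assoc]
    refine (List.Perm.append_left _ (List.perm_append_singleton _ _)).trans ?_
    rw [← hsplit]
termination_by l => l.length
decreasing_by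
  · exact length_takeWhile_lt (foldr_max_mem x t)
  · exact length_tail_dropWhile_lt (by simp)

theorem S_append_lt : ∀ (B A : List ℕ), (∀ a ∈ A, ∀ b ∈ B, a < b) → S (A ++ B) = S A ++ S B
  | [], A, _ => by simp [S_nil]
  | y :: t, [], _ => by simp [S_nil]
  | y :: t, x :: A', h => by
    have hMB : t.foldr max y ∈ y :: t := foldr_max_mem y t
    set M := t.foldr max y with hM
    have hmem : M ∈ x :: (A' ++ y :: t) := by
      rcases List.mem_cons.mp hMB with h' | h' <;> simp [h']
    have hle : ∀ a ∈ x :: (A' ++ y :: t), a ≤ M := by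
      intro a ha
      have ha' : a ∈ (x :: A') ++ (y :: t) := ha
      rcases List.mem_append.mp ha' with h' | h'
      · exact le_of_lt (h a h' M hMB)
      · exact le_foldr_max y t a h'
    have hmax : (A' ++ y :: t).foldr max x = M := foldr_max_eq hmem hle
    have hsp := takeWhile_append_all (p := (· ≠ M)) (A := x :: A') (B := y :: t)
      (fun a ha => by simp [ne_of_lt (h a ha M hMB)])
    have hrec := S_append_lt ((y :: t).takeWhile (· ≠ M)) (x :: A')
      (fun a ha b hb => h a ha b (List.takeWhile_subset _ hb))
    have hstep : S ((x :: A') ++ y :: t) =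
        S ((x :: A') ++ (y :: t).takeWhile (· ≠ M)) ++
          S (((y :: t).dropWhile (· ≠ M)).tail) ++ [M] := by
      show S (x :: (A' ++ y :: t)) = _
      rw [S_cons, hmax]
      show S (((x :: A') ++ (y :: t)).takeWhile (· ≠ M)) ++
        S ((((x :: A') ++ (y :: t)).dropWhile (· ≠ M)).tail) ++ [M] = _
      rw [hsp.1, hsp.2]
    rw [hstep, hrec, S_cons (x := y) (l := t), ← hM]
    simp [List.append_assoc]
termination_by B A _ => B.length
decreasing_by
  · exact length_takeWhile_lt hMB

theorem foldr_max_map_add (k x : ℕ) (l : List ℕ) :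
    (l.map (· + k)).foldr max (x + k) = l.foldr max x + k := by
  induction l with
  | nil => rfl
  | cons a t ih =>
    simp only [List.map_cons, List.foldr_cons, ih]
    exact max_add_add_right a _ k

theorem S_shift : ∀ (l : List ℕ) (k : ℕ), S (l.map (· + k)) = (S l).map (· + k)
  | [], k => by simp [S_nil]
  | x :: t, k => by
    have hm := foldr_max_map_add k x t
    have hpred : ((fun a => decide (a ≠ t.foldr max x + k)) ∘ (· + k) : ℕ → Bool) =
        (fun a => decide (a ≠ t.foldr max x)) := by
      funext a; simp [Function.comp]
    have h1 := S_shift ((x :: t).takeWhile (· ≠ t.foldr max x)) k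
    have h2 := S_shift (((x :: t).dropWhile (· ≠ t.foldr max x)).tail) k
    show S ((x + k) :: t.map (· + k)) = _
    rw [S_cons, hm]
    show S (((x :: t).map (· + k)).takeWhile (· ≠ t.foldr max x + k)) ++
      S ((((x :: t).map (· + k)).dropWhile (· ≠ t.foldr max x + k)).tail) ++
        [t.foldr max x + k] = _
    rw [List.takeWhile_map, List.dropWhile_map, hpred, ← List.map_tail, h1, h2, S_cons]
    simp
termination_by l k => l.length
decreasing_by
  · exact length_takeWhile_lt (foldr_max_mem x t)
  · exact length_tail_dropWhile_lt (by simp)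

theorem shift_idPerm (k ℓ : ℕ) : shift k (idPerm ℓ) = List.range' (k + 1) ℓ := by
  have h : ((· + k) : ℕ → ℕ) = (k + ·) := funext fun x => Nat.add_comm x k
  simp only [shift, idPerm, h, List.map_add_range']

theorem idPerm_split (k ℓ : ℕ) :
    idPerm (k + ℓ + 1) = idPerm k ++ (List.range' (k + 1) ℓ ++ [k + ℓ + 1]) := by
  have h1 : List.range' 1 (k + ℓ + 1) = List.range' 1 (k + ℓ) ++ [k + ℓ + 1] := by
    have := List.range'_concat (step := 1) (s := 1) (n := k + ℓ)
    simpa [Nat.add_comm] using this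
  have h2 : List.range' 1 k ++ List.range' (k + 1) ℓ = List.range' 1 (k + ℓ) := by
    have := List.range'_append_1 (s := 1) (m := k) (n := ℓ)
    simpa [Nat.add_comm] using this
  simp only [idPerm, h1, ← h2, List.append_assoc]
/-- For `k, ℓ ≥ 0`, `π1 ∈ T_k` and `π2 ∈ T_ℓ` (with `T_0 = {ε}`),
`C1(π1, π2)` is a two-stack sortable permutation of length `k + ℓ + 1`. -/
theorem C1_valid (k ℓ : ℕ) (π1 π2 : List ℕ)
    (h1 : π1.length = k) (h1' : Is2SS π1) (h2 : π2.length = ℓ) (h2' : Is2SS π2) :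
    (C1 π1 π2).length = k + ℓ + 1 ∧ Is2SS (C1 π1 π2) := by
  subst h1; subst h2
  set K := π1.length with hK
  set L := π2.length with hL
  set n := K + L + 1 with hn
  have hp1 : π1.Perm (idPerm K) := h1'.1
  have hp2 : π2.Perm (idPerm L) := h2'.1
  have hb1 : ∀ a ∈ π1, 1 ≤ a ∧ a ≤ K := by
    intro a ha
    have := hp1.mem_iff.mp ha
    simp only [idPerm, List.mem_range'_1] at this
    omega
  have hb2 : ∀ a ∈ π2, 1 ≤ a ∧ a ≤ L := by
    intro a ha
    have := hp2.mem_iff.mp ha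
    simp only [idPerm, List.mem_range'_1] at this
    omega
  have hbS1 : ∀ a ∈ S π1, 1 ≤ a ∧ a ≤ K := fun a ha => hb1 a ((S_perm π1).mem_iff.mp ha)
  have hbS2 : ∀ a ∈ S π2, 1 ≤ a ∧ a ≤ L := fun a ha => hb2 a ((S_perm π2).mem_iff.mp ha)
  have hlen : (C1 π1 π2).length = n := by
    simp only [C1, shift, List.length_append, List.length_cons, List.length_map]
    omega
  have hC : C1 π1 π2 = π1 ++ n :: shift K π2 := rfl
  have hpshift : (shift K π2).Perm (List.range' (K + 1) L) := by
    have h := hp2.map (· + K)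
    rw [show (idPerm L).map (· + K) = shift K (idPerm L) from rfl, shift_idPerm] at h
    exact h
  have hSC : S (C1 π1 π2) = S π1 ++ shift K (S π2) ++ [n] := by
    rw [hC, S_split π1 (shift K π2) n (fun a ha => by have := hb1 a ha; omega)
      (fun b hb => by
        obtain ⟨c, hc, rfl⟩ := List.mem_map.mp hb
        have := hb2 c hc; omega)]
    rw [show shift K π2 = π2.map (· + K) from rfl, S_shift]
    rfl
  have hbig : ∀ a ∈ S π1 ++ shift K (S π2), a < n := by
    intro a ha
    rcases List.mem_append.mp ha with h | h
    · have := hbS1 a h; omega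
    · obtain ⟨c, hc, rfl⟩ := List.mem_map.mp h
      have := hbS2 c hc; omega
  have hSSC : S (S (C1 π1 π2)) = S (S π1 ++ shift K (S π2)) ++ [n] := by
    rw [hSC, show S π1 ++ shift K (S π2) ++ [n] =
      (S π1 ++ shift K (S π2)) ++ n :: [] by simp]
    rw [S_split _ [] n hbig (by simp), S_nil, List.append_nil]
  have hsplit2 : S (S π1 ++ shift K (S π2)) = S (S π1) ++ S (shift K (S π2)) := by
    apply S_append_lt (shift K (S π2)) (S π1)
    intro a ha b hb
    obtain ⟨c, hc, rfl⟩ := List.mem_map.mp hb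
    have := hbS1 a ha
    have := hbS2 c hc
    omega
  have hfinal : S (S (C1 π1 π2)) = idPerm n := by
    rw [hSSC, hsplit2, show shift K (S π2) = (S π2).map (· + K) from rfl, S_shift,
      h1'.2, h2'.2]
    rw [show (idPerm L).map (· + K) = shift K (idPerm L) from rfl, shift_idPerm]
    rw [hn, idPerm_split K L, List.append_assoc]
  refine ⟨hlen, ?_, ?_⟩
  · show (C1 π1 π2).Perm (idPerm (C1 π1 π2).length)
    rw [hlen, hC, hn, idPerm_split K L]
    exact hp1.append ((hpshift.cons n).trans (List.perm_append_singleton _ _).symm)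
  · rw [hlen]; exact hfinal

end TSP
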